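/- Let α ∈ R^d be a vector that is not of constant type, i.e., for every C > 0 there exists a nonzero integer Q with ‖Qα‖_Z < C |Q|^{-1/d}. Then the translation T_α on T^d does not have the monotone shrinking target property: for any x₀ ∈ T^d there exists a nonincreasing sequence (r_n) with ∑ r_n^d = ∞ such that μ(limsup T_α^{-n} B(x₀, r_n)) = 0. -/

import Mathlib

open MeasureTheory Filter Metric ENNReal Topology

lemma exists_seq_rec' {β : Type*} (P : ℕ → β → Prop) (R : ℕ → β → β → Prop)
    (h0 : ∃ b, P 0 b) (hstep : ∀ k b, P k b → ∃ b', P (k+1) b' ∧ R k b b') :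
    ∃ g : ℕ → β, (∀ k, P k (g k)) ∧ ∀ k, R k (g k) (g (k+1)) := by
  obtain ⟨b0, hb0⟩ := h0
  choose F hF hR using hstep
  let g : ∀ n : ℕ, {b : β // P n b} :=
    fun n => Nat.rec ⟨b0, hb0⟩ (fun k p => ⟨F k p.1 p.2, hF k p.1 p.2⟩) n
  exact ⟨fun n => (g n).1, fun n => (g n).2, fun k => hR k (g k).1 (g k).2⟩

/-- The invariant maintained in the construction of the block data `(Q, L, r)`. -/
def MSTPInv {d : ℕ} (c : Fin d → AddCircle (1:ℝ)) (k : ℕ) (p : ℕ × ℕ × ℝ) : Prop :=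
  0 < p.2.2 ∧ 1 ≤ p.2.1 ∧ 0 < p.1 ∧
    1 ≤ (p.2.1:ℝ) * p.2.2 ^ d ∧ (p.1:ℝ) * (4 * p.2.2) ^ d ≤ (1/2:ℝ)^k ∧
    (p.2.1:ℝ) * ‖p.1 • c‖ ≤ (p.1:ℝ) * p.2.2

lemma mstp_build {d : ℕ} (hd : 0 < d) (c : Fin d → AddCircle (1:ℝ))
    (hpos : ∀ C : ℝ, 0 < C → ∃ Q : ℕ, 0 < Q ∧ ‖Q • c‖ < C * (Q:ℝ) ^ (-(1:ℝ)/(d:ℝ)))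
    (m : ℕ) (ρ : ℝ) (hρ : 0 < ρ) :
    ∃ p : ℕ × ℕ × ℝ, MSTPInv c m p ∧ p.2.2 ≤ ρ := by
  have hd' : (d:ℝ) ≠ 0 := Nat.cast_ne_zero.mpr hd.ne'
  have hd0 : (0:ℝ) < d := Nat.cast_pos.mpr hd
  set h : ℝ := (1/2:ℝ)^m with hh
  have hh0 : 0 < h := by positivity
  have hh1 : h ≤ 1 := by
    rw [hh]; exact pow_le_one₀ (by norm_num) (by norm_num)
  set ck : ℝ := h * h ^ ((1:ℝ)/(d:ℝ)) / (8 * 4^d) with hck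
  have hck0 : 0 < ck := by positivity
  set C : ℝ := min (ρ^(d+1)/2) ck with hC
  have hC0 : 0 < C := lt_min (by positivity) hck0
  obtain ⟨Q, hQ0, hQ⟩ := hpos C hC0
  have hQ1 : (1:ℝ) ≤ (Q:ℝ) := by exact_mod_cast hQ0
  have hQr0 : (0:ℝ) < (Q:ℝ) := by positivity
  have hrp1 : (Q:ℝ) ^ (-(1:ℝ)/(d:ℝ)) ≤ 1 :=
    Real.rpow_le_one_of_one_le_of_nonpos hQ1 (by
      rw [neg_div]; exact neg_nonpos.mpr (by positivity))
  have hrp0 : 0 < (Q:ℝ) ^ (-(1:ℝ)/(d:ℝ)) := Real.rpow_pos_of_pos hQr0 _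
  set s : ℝ := (h / Q) ^ ((1:ℝ)/(d:ℝ)) / 4 with hs
  have hs0 : 0 < s := by positivity
  have hhQ1 : h / Q ≤ 1 := by
    rw [div_le_one hQr0]; exact le_trans hh1 hQ1
  have hs1 : s ≤ 1 := by
    have : (h / Q) ^ ((1:ℝ)/(d:ℝ)) ≤ 1 :=
      Real.rpow_le_one (by positivity) hhQ1 (by positivity)
    rw [hs]; linarith
  have hsd : s ^ d = (h / Q) / 4 ^ d := by
    rw [hs, div_pow]
    congr 1
    rw [← Real.rpow_natCast ((h / Q) ^ ((1:ℝ)/(d:ℝ))) d, ← Real.rpow_mul (by positivity),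
      one_div, inv_mul_cancel₀ hd', Real.rpow_one]
  have hvu : (h / Q) ^ ((1:ℝ)/(d:ℝ)) = h ^ ((1:ℝ)/(d:ℝ)) * (Q:ℝ) ^ (-(1:ℝ)/(d:ℝ)) := by
    rw [Real.div_rpow hh0.le hQr0.le, neg_div, Real.rpow_neg hQr0.le, div_eq_mul_inv]
  set r : ℝ := min ρ s with hr
  have hr0 : 0 < r := lt_min hρ hs0
  have hr1 : r ≤ 1 := le_trans (min_le_right _ _) hs1
  have hrd0 : (0:ℝ) < r ^ d := by positivity
  have hrd1 : r ^ d ≤ 1 := pow_le_one₀ hr0.le hr1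
  set L : ℕ := ⌈1 / r ^ d⌉₊ with hL
  have hL1 : 1 ≤ L := Nat.one_le_iff_ne_zero.mpr (by
    have : 0 < L := Nat.ceil_pos.mpr (by positivity)
    omega)
  refine ⟨(Q, L, r), ⟨hr0, hL1, hQ0, ?_, ?_, ?_⟩, min_le_left _ _⟩
  · have := Nat.le_ceil (1 / r ^ d)
    calc (1:ℝ) = (1 / r ^ d) * r ^ d := by field_simp
    _ ≤ (L:ℝ) * r ^ d := by
        apply mul_le_mul_of_nonneg_right _ hrd0.le
        exact this
  · have hrs : r ≤ s := min_le_right _ _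
    have h1 : (4 * r) ^ d ≤ (4 * s) ^ d :=
      pow_le_pow_left₀ (by positivity) (by linarith) d
    have h2 : (Q:ℝ) * (4 * s) ^ d = h := by
      rw [mul_pow, hsd]
      field_simp
    calc (Q:ℝ) * (4 * r) ^ d ≤ (Q:ℝ) * (4 * s) ^ d :=
          mul_le_mul_of_nonneg_left h1 hQr0.le
    _ = h := h2
  · set δ : ℝ := ‖Q • c‖ with hδ
    have hδ0 : 0 ≤ δ := norm_nonneg _
    have hLle : (L:ℝ) ≤ 2 / r ^ d := by
      have h1 : (L:ℝ) < 1 / r ^ d + 1 := Nat.ceil_lt_add_one (by positivity)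
      have h2 : (1:ℝ) ≤ 1 / r ^ d := by
        rw [le_div_iff₀ hrd0]; linarith
      have : 1 / r ^ d + 1 ≤ 2 / r ^ d := by
        rw [div_add' _ _ _ hrd0.ne', div_le_div_iff₀ hrd0 hrd0]
        nlinarith
      linarith
    have hδr : δ ≤ (Q:ℝ) * r ^ (d+1) / 2 := by
      rcases le_total ρ s with hcase | hcase
      · have hrρ : r = ρ := min_eq_left hcase
        have c1 : δ < C := lt_of_lt_of_le hQ (by
          calc C * (Q:ℝ) ^ (-(1:ℝ)/(d:ℝ)) ≤ C * 1 :=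
                mul_le_mul_of_nonneg_left hrp1 hC0.le
          _ = C := mul_one C)
        have c2 : C ≤ ρ^(d+1)/2 := min_le_left _ _
        have c3 : ρ^(d+1)/2 ≤ (Q:ℝ) * ρ^(d+1)/2 := by
          have : (0:ℝ) ≤ ρ^(d+1) := by positivity
          rw [div_le_div_iff₀ (by norm_num) (by norm_num)]
          nlinarith
        rw [hrρ]; linarith
      · have hrs : r = s := min_eq_right hcase
        have key : ck * (Q:ℝ) ^ (-(1:ℝ)/(d:ℝ)) = (Q:ℝ) * s ^ (d+1) / 2 := by
          rw [pow_succ, hsd, hs, hvu, hck]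
          field_simp
          ring
        have c1 : δ < ck * (Q:ℝ) ^ (-(1:ℝ)/(d:ℝ)) :=
          lt_of_lt_of_le hQ (mul_le_mul_of_nonneg_right (min_le_right _ _) hrp0.le)
        rw [hrs]; linarith [key ▸ c1]
    calc (L:ℝ) * δ ≤ (2 / r ^ d) * δ := mul_le_mul_of_nonneg_right hLle hδ0
    _ ≤ (2 / r ^ d) * ((Q:ℝ) * r ^ (d+1) / 2) :=
        mul_le_mul_of_nonneg_left hδr (by positivity)
    _ = (Q:ℝ) * r := by
        rw [pow_succ]
        field_simp

lemma mstp_construction {d : ℕ} (hd : 0 < d) (c : Fin d → AddCircle (1:ℝ))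
    (hpos : ∀ C : ℝ, 0 < C → ∃ Q : ℕ, 0 < Q ∧ ‖Q • c‖ < C * (Q:ℝ) ^ (-(1:ℝ)/(d:ℝ))) :
    ∃ (Qs Ls : ℕ → ℕ) (rad : ℕ → ℝ), Antitone rad ∧
      ∀ k, MSTPInv c k (Qs k, Ls k, rad k) := by
  obtain ⟨g, hP, hR⟩ := exists_seq_rec' (MSTPInv c) (fun _ p p' => p'.2.2 ≤ p.2.2)
    (by obtain ⟨p, hp, _⟩ := mstp_build hd c hpos 0 1 one_pos; exact ⟨p, hp⟩)
    (fun k b hb => by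
      obtain ⟨p, hp, hle⟩ := mstp_build hd c hpos (k+1) b.2.2 hb.1
      exact ⟨p, hp, hle⟩)
  exact ⟨fun k => (g k).1, fun k => (g k).2.1, fun k => (g k).2.2,
    antitone_nat_of_succ_le hR, fun k => hP k⟩

noncomputable def normZ {d : ℕ} (v : Fin d → ℝ) : ℝ :=
  dist (fun i => ((v i : ℝ) : AddCircle (1:ℝ))) (0 : Fin d → AddCircle (1:ℝ))

theorem stmt6 (d : ℕ) (hd : 0 < d) (α : Fin d → ℝ)
    (hα : ∀ C : ℝ, 0 < C → ∃ Q : ℤ, Q ≠ 0 ∧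
      normZ (fun i => (Q : ℝ) * α i) < C * |(Q : ℝ)| ^ (-(1:ℝ)/(d:ℝ)))
    (x₀ : Fin d → AddCircle (1:ℝ)) :
    ∃ r : ℕ → ℝ, Antitone r ∧ (∀ n, 0 ≤ r n) ∧ ¬ Summable (fun n => r n ^ d) ∧
      volume {x : Fin d → AddCircle (1:ℝ) | ∃ᶠ n in atTop,
        (fun y => y + fun i => ((α i : ℝ) : AddCircle (1:ℝ)))^[n] x ∈ ball x₀ (r n)} = 0 := by
  set c : Fin d → AddCircle (1:ℝ) := fun i => ((α i : ℝ) : AddCircle (1:ℝ)) with hc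
  have hnormZ : ∀ Q : ℤ, normZ (fun i => (Q:ℝ) * α i) = ‖Q • c‖ := by
    intro Q
    rw [normZ, dist_zero_right]
    congr 1
    funext i
    rw [Pi.smul_apply, hc, ← AddCircle.coe_zsmul, zsmul_eq_mul]
  have hpos : ∀ C : ℝ, 0 < C → ∃ Q : ℕ, 0 < Q ∧
      ‖(Q:ℕ) • c‖ < C * (Q:ℝ) ^ (-(1:ℝ)/(d:ℝ)) := by
    intro C hC
    obtain ⟨Q, hQ0, hQ⟩ := hα C hC
    rw [hnormZ] at hQ
    refine ⟨Q.natAbs, Int.natAbs_pos.mpr hQ0, ?_⟩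
    have habs : |(Q:ℝ)| = ((Q.natAbs : ℕ) : ℝ) := by
      rw [← Int.cast_abs, Int.abs_eq_natAbs, Int.cast_natCast]
    have hnorm : ‖(Q.natAbs : ℕ) • c‖ = ‖Q • c‖ := by
      have h1 : (Q.natAbs : ℕ) • c = ((Q.natAbs : ℤ)) • c := (natCast_zsmul c _).symm
      rcases Int.natAbs_eq Q with h | h
      · rw [h1, ← h]
      · rw [h1, ← neg_neg ((Q.natAbs : ℤ) : ℤ), ← h, neg_zsmul, norm_neg]
    rw [hnorm, ← habs]
    exact hQ
  obtain ⟨Qs, Ls, rad, hradAnti, hInv⟩ := mstp_construction hd c hpos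
  have hrad0 : ∀ k, 0 < rad k := fun k => (hInv k).1
  have hLs1 : ∀ k, 1 ≤ Ls k := fun k => (hInv k).2.1
  have hQs1 : ∀ k, 0 < Qs k := fun k => (hInv k).2.2.1
  have hLr : ∀ k, 1 ≤ (Ls k:ℝ) * rad k ^ d := fun k => (hInv k).2.2.2.1
  have hQr : ∀ k, (Qs k:ℝ) * (4 * rad k) ^ d ≤ (1/2:ℝ)^k := fun k => (hInv k).2.2.2.2.1
  have hLδ : ∀ k, (Ls k:ℝ) * ‖Qs k • c‖ ≤ (Qs k:ℝ) * rad k := fun k => (hInv k).2.2.2.2.2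
  set N : ℕ → ℕ := fun K => ∑ k ∈ Finset.range K, Ls k with hN
  have hN0 : N 0 = 0 := rfl
  have hNsucc : ∀ K, N (K+1) = N K + Ls K := fun K => Finset.sum_range_succ _ _
  have hNmono : StrictMono N := by
    apply strictMono_nat_of_lt_succ
    intro K; rw [hNsucc]; exact Nat.lt_add_of_pos_right (hLs1 K)
  have hNge : ∀ K, K ≤ N K := fun K => by
    calc K = ∑ k ∈ Finset.range K, 1 := by simp
    _ ≤ N K := Finset.sum_le_sum fun k _ => hLs1 k
  set Kf : ℕ → ℕ := fun n => Nat.findGreatest (fun k => N k ≤ n) n with hKf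
  have hKf1 : ∀ n, N (Kf n) ≤ n := by
    intro n
    have h0 : (fun k => N k ≤ n) 0 := by simp [hN0]
    exact Nat.findGreatest_spec (P := fun k => N k ≤ n) (Nat.zero_le n) h0
  have hKf3 : ∀ n K, N K ≤ n → K ≤ Kf n := fun n K h =>
    Nat.le_findGreatest (le_trans (hNge K) h) h
  have hKf2 : ∀ n, n < N (Kf n + 1) := by
    intro n
    by_contra h
    push_neg at h
    have := hKf3 n (Kf n + 1) h
    omega
  have hKfinv : ∀ k n, N k ≤ n → n < N (k+1) → Kf n = k := by
    intro k n h1 h2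
    refine le_antisymm ?_ (hKf3 n k h1)
    by_contra hcon
    push_neg at hcon
    have hle : N (k+1) ≤ n := le_trans (hNmono.monotone (Nat.succ_le_of_lt hcon)) (hKf1 n)
    omega
  have hKfmono : Monotone Kf := by
    intro m n hmn
    exact Nat.findGreatest_mono (fun k hk => le_trans hk hmn) hmn
  refine ⟨fun n => rad (Kf n), fun m n hmn => hradAnti (hKfmono hmn),
    fun n => (hrad0 _).le, ?_, ?_⟩
  · -- not summable
    intro hS
    have hsum : ∀ K : ℕ, (K:ℝ) ≤ ∑ n ∈ Finset.range (N K), rad (Kf n) ^ d := by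
      intro K
      induction K with
      | zero => simp [hN0]
      | succ K ih =>
        have hsplit : ∑ n ∈ Finset.range (N (K+1)), rad (Kf n) ^ d
            = ∑ n ∈ Finset.range (N K), rad (Kf n) ^ d
              + ∑ n ∈ Finset.Ico (N K) (N (K+1)), rad (Kf n) ^ d := by
          rw [Finset.range_eq_Ico, Finset.range_eq_Ico]
          exact (Finset.sum_Ico_consecutive (fun n => rad (Kf n) ^ d) (Nat.zero_le _)
            (hNmono.monotone (Nat.le_succ K))).symm
        have hblock : ∑ n ∈ Finset.Ico (N K) (N (K+1)), rad (Kf n) ^ d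
            = (Ls K : ℝ) * rad K ^ d := by
          calc ∑ n ∈ Finset.Ico (N K) (N (K+1)), rad (Kf n) ^ d
              = ∑ _n ∈ Finset.Ico (N K) (N (K+1)), rad K ^ d :=
                Finset.sum_congr rfl (fun n hn => by
                  rw [Finset.mem_Ico] at hn
                  rw [hKfinv K n hn.1 hn.2])
          _ = (Ls K : ℝ) * rad K ^ d := by
                rw [Finset.sum_const, Nat.card_Ico, hNsucc, nsmul_eq_mul]
                congr 2
                omega
        rw [hsplit, hblock]
        push_cast
        have := hLr K
        linarith
    have hle : ∀ K : ℕ, (K:ℝ) ≤ ∑' n, rad (Kf n) ^ d := fun K =>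
      le_trans (hsum K) (Summable.sum_le_tsum (Finset.range (N K)) (fun n _ => pow_nonneg (hrad0 _).le _) hS)
    obtain ⟨K, hK⟩ := exists_nat_gt (∑' n, rad (Kf n) ^ d)
    linarith [hle K]
  · -- measure zero
    have hiter : ∀ (x : Fin d → AddCircle (1:ℝ)) (n : ℕ), (fun y => y + c)^[n] x = x + n • c := by
      intro x n
      induction n with
      | zero => simp
      | succ n ih => rw [Function.iterate_succ_apply', ih, succ_nsmul, add_assoc]
    set E : ℕ → Set (Fin d → AddCircle (1:ℝ)) := fun k =>
      ⋃ b ∈ Finset.range (Qs k), (fun x => x + (N k + b) • c) ⁻¹' ball x₀ (2 * rad k) with hE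
    have hsub : ∀ K, {x : Fin d → AddCircle (1:ℝ) | ∃ᶠ n in atTop,
        (fun y => y + c)^[n] x ∈ ball x₀ (rad (Kf n))} ⊆ ⋃ j : ℕ, E (K + j) := by
      intro K x hx
      simp only [Set.mem_setOf_eq] at hx
      rw [frequently_atTop] at hx
      obtain ⟨n, hnN, hxn⟩ := hx (N K)
      rw [hiter, mem_ball] at hxn
      set k := Kf n with hk
      have hKk : K ≤ k := hKf3 n K hnN
      have hQk := hQs1 k
      set a := (n - N k) / Qs k with ha
      set b := (n - N k) % Qs k with hb
      have hdm : a * Qs k + b = n - N k := by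
        rw [Nat.mul_comm]; exact Nat.div_add_mod _ _
      have hbQ : b < Qs k := Nat.mod_lt _ hQk
      have hNkn : N k ≤ n := by rw [hk]; exact hKf1 n
      have hnL : n - N k < Ls k := by
        have h2 := hKf2 n
        rw [hNsucc, ← hk] at h2
        omega
      have haL : a * Qs k ≤ Ls k := by omega
      have hδa : (a:ℝ) * ‖Qs k • c‖ ≤ rad k := by
        have hQpos : (0:ℝ) < (Qs k : ℝ) := by exact_mod_cast hQk
        rw [← mul_le_mul_iff_left₀ hQpos]
        calc (a:ℝ) * ‖Qs k • c‖ * (Qs k : ℝ)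
            = ((a * Qs k : ℕ) : ℝ) * ‖Qs k • c‖ := by push_cast; ring
        _ ≤ (Ls k : ℝ) * ‖Qs k • c‖ :=
            mul_le_mul_of_nonneg_right (by exact_mod_cast haL) (norm_nonneg _)
        _ ≤ (Qs k : ℝ) * rad k := hLδ k
        _ = rad k * (Qs k : ℝ) := mul_comm _ _
      have hxmem : x + n • c = (x + (N k + b) • c) + (a * Qs k) • c := by
        have hn' : n = (N k + b) + a * Qs k := by omega
        rw [hn', add_nsmul, add_assoc]
      have hdist : dist (x + (N k + b) • c) x₀ < 2 * rad k := by
        have h1 : dist (x + (N k + b) • c) (x + n • c) = ‖(a * Qs k) • c‖ := by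
          rw [hxmem, dist_self_add_right]
        have h2 : ‖(a * Qs k) • c‖ ≤ (a:ℝ) * ‖Qs k • c‖ := by
          rw [mul_comm, mul_nsmul]
          exact norm_nsmul_le
        calc dist (x + (N k + b) • c) x₀
            ≤ dist (x + (N k + b) • c) (x + n • c) + dist (x + n • c) x₀ :=
              dist_triangle _ _ _
        _ < rad k + rad k := add_lt_add_of_le_of_lt (h1 ▸ le_trans h2 hδa) hxn
        _ = 2 * rad k := by ring
      refine Set.mem_iUnion.mpr ⟨k - K, ?_⟩
      have hkK : K + (k - K) = k := by omega
      rw [hkK, hE]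
      exact Set.mem_biUnion (Finset.mem_range.mpr hbQ)
        (by rw [Set.mem_preimage, mem_ball]; exact hdist)
    have hEvol : ∀ k, volume (E k) ≤ (1/2 : ℝ≥0∞)^k := by
      intro k
      have hball : volume (ball x₀ (2 * rad k)) ≤ ENNReal.ofReal ((4 * rad k)^d) := by
        have h2r : (0:ℝ) < 2 * rad k := by linarith [hrad0 k]
        rw [ball_pi _ h2r, volume_pi_pi]
        calc ∏ i, volume (ball (x₀ i) (2 * rad k))
            ≤ ∏ _i : Fin d, ENNReal.ofReal (4 * rad k) := by
              refine Finset.prod_le_prod' fun i _ => ?_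
              calc volume (ball (x₀ i) (2 * rad k))
                  ≤ volume (closedBall (x₀ i) (2 * rad k)) :=
                    measure_mono ball_subset_closedBall
              _ = ENNReal.ofReal (min 1 (2 * (2 * rad k))) :=
                    AddCircle.volume_closedBall (T := 1) _
              _ ≤ ENNReal.ofReal (4 * rad k) :=
                    ENNReal.ofReal_le_ofReal (le_trans (min_le_right _ _) (by linarith))
        _ = ENNReal.ofReal (4 * rad k) ^ d := by
              rw [Finset.prod_const, Finset.card_univ, Fintype.card_fin]
        _ = ENNReal.ofReal ((4 * rad k)^d) := (ENNReal.ofReal_pow (by linarith [hrad0 k]) d).symm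
      calc volume (E k)
          ≤ ∑ b ∈ Finset.range (Qs k),
              volume ((fun x => x + (N k + b) • c) ⁻¹' ball x₀ (2 * rad k)) :=
            measure_biUnion_finset_le _ _
      _ = ∑ _b ∈ Finset.range (Qs k), volume (ball x₀ (2 * rad k)) :=
            Finset.sum_congr rfl fun b _ => measure_preimage_add_right _ _ _
      _ = (Qs k : ℝ≥0∞) * volume (ball x₀ (2 * rad k)) := by
            rw [Finset.sum_const, Finset.card_range, nsmul_eq_mul]
      _ ≤ (Qs k : ℝ≥0∞) * ENNReal.ofReal ((4 * rad k)^d) := mul_le_mul_right hball _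
      _ = ENNReal.ofReal ((Qs k : ℝ) * (4 * rad k)^d) := by
            rw [← ENNReal.ofReal_natCast, ← ENNReal.ofReal_mul (Nat.cast_nonneg _)]
      _ ≤ ENNReal.ofReal ((1/2:ℝ)^k) := ENNReal.ofReal_le_ofReal (hQr k)
      _ = (1/2 : ℝ≥0∞)^k := by
            rw [ENNReal.ofReal_pow (by norm_num), one_div, one_div,
              ENNReal.ofReal_inv_of_pos two_pos, ENNReal.ofReal_ofNat]
    have hμ : ∀ K : ℕ, volume {x : Fin d → AddCircle (1:ℝ) | ∃ᶠ n in atTop,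
        (fun y => y + c)^[n] x ∈ ball x₀ (rad (Kf n))} ≤ (1/2:ℝ≥0∞)^K * 2 := by
      intro K
      calc volume {x : Fin d → AddCircle (1:ℝ) | ∃ᶠ n in atTop,
            (fun y => y + c)^[n] x ∈ ball x₀ (rad (Kf n))}
          ≤ volume (⋃ j : ℕ, E (K + j)) := measure_mono (hsub K)
      _ ≤ ∑' j : ℕ, volume (E (K + j)) := measure_iUnion_le _
      _ ≤ ∑' j : ℕ, (1/2:ℝ≥0∞)^(K+j) := ENNReal.tsum_le_tsum fun j => hEvol (K+j)
      _ = (1/2:ℝ≥0∞)^K * ∑' j : ℕ, (1/2:ℝ≥0∞)^j := by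
            simp_rw [pow_add]; rw [ENNReal.tsum_mul_left]
      _ = (1/2:ℝ≥0∞)^K * 2 := by
            rw [ENNReal.tsum_geometric]
            norm_num
    have htend : Tendsto (fun K : ℕ => (1/2:ℝ≥0∞)^K * 2) atTop (nhds 0) := by
      have h1 : Tendsto (fun K : ℕ => (1/2:ℝ≥0∞)^K) atTop (nhds 0) :=
        ENNReal.tendsto_pow_atTop_nhds_zero_of_lt_one (by norm_num)
      simpa using ENNReal.Tendsto.mul_const h1 (Or.inr (by norm_num))
    exact le_antisymm (ge_of_tendsto' htend hμ) zero_le
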